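/- Let q > 1 be a real number and n ≥ 1 an integer. For 0 ≤ l ≤ 2n, let 𝔐_l be the (l+1)×(l+1) real matrix with (i, s)-entry (-q)^{s(2n-i)} (0 ≤ i, s ≤ l), and let d_{i,l} (0 ≤ i ≤ l) be the components of the unique solution of 𝔐_l d = (0, …, 0, 1)^T. Let Δ be the (2n+1)×(2n+1) upper triangular matrix with Δ_{i,l} = d_{i,l} for 0 ≤ i ≤ l ≤ 2n and Δ_{i,l} = 0 for i > l, let v ∈ ℝ^{2n+1} (indexed by 0, …, 2n) have v_0 = 0 and v_k = (-q)^{n(2n-k) - 4n²} - (-q)^{-2n²} for 1 ≤ k ≤ 2n, and let K ∈ ℝ^{2n+1} be the unique solution of (𝔐_{2n} · Δ) · K = v. Then Δ·K = w, where w ∈ ℝ^{2n+1} is the vector with w_0 = -(-q)^{-2n²}, w_n = (-q)^{-4n²}, and all other components zero. -/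

import Mathlib

/- Lemma 4.3: with Δ the upper triangular matrix of the constants d_{i,l}, v the given
right-hand side and K the solution of (𝔐_{2n}·Δ)K = v, one has Δ·K = w. -/

/-- The (l+1)×(l+1) matrix 𝔐_l with (i,s)-entry (-q)^{s(2n-i)}. -/
noncomputable def Mmat (q : ℝ) (n l : ℕ) : Matrix (Fin (l + 1)) (Fin (l + 1)) ℝ :=
  Matrix.of fun i s => (-q) ^ ((s : ℕ) * (2 * n - (i : ℕ)))

theorem stmt7 (q : ℝ) (hq : 1 < q) (n : ℕ) (hn : 1 ≤ n)
    (d : ℕ → ℕ → ℝ)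
    (hd : ∀ l, l ≤ 2 * n →
      (Mmat q n l).mulVec (fun i => d (i : ℕ) l) = Pi.single (Fin.last l) 1)
    (Δ : Matrix (Fin (2 * n + 1)) (Fin (2 * n + 1)) ℝ)
    (hΔ : ∀ i l : Fin (2 * n + 1),
      Δ i l = if (i : ℕ) ≤ (l : ℕ) then d (i : ℕ) (l : ℕ) else 0)
    (v : Fin (2 * n + 1) → ℝ)
    (hv : ∀ k : Fin (2 * n + 1), v k =
      if (k : ℕ) = 0 then 0
      else (-q) ^ ((n : ℤ) * (2 * (n : ℤ) - ((k : ℕ) : ℤ)) - 4 * (n : ℤ) ^ 2)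
        - (-q) ^ (-2 * (n : ℤ) ^ 2))
    (K : Fin (2 * n + 1) → ℝ)
    (hK : (Mmat q n (2 * n) * Δ).mulVec K = v) :
    Δ.mulVec K = fun i : Fin (2 * n + 1) =>
      if (i : ℕ) = 0 then -(-q) ^ (-2 * (n : ℤ) ^ 2)
      else if (i : ℕ) = n then (-q) ^ (-4 * (n : ℤ) ^ 2)
      else 0 := by
  have hq0 : (0:ℝ) < q := by linarith
  have hnq : (-q : ℝ) ≠ 0 := by intro h; nlinarith [neg_eq_zero.mp h]
  set A := Mmat q n (2 * n) with hA
  -- A is a Vandermonde matrix with injective nodes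
  have hAvdm : A = Matrix.vandermonde (fun i : Fin (2 * n + 1) => (-q) ^ (2 * n - (i : ℕ))) := by
    funext i s
    simp only [hA, Mmat, Matrix.of_apply, Matrix.vandermonde, ← pow_mul, mul_comm]
  have hinj : Function.Injective (fun i : Fin (2 * n + 1) => (-q) ^ (2 * n - (i : ℕ))) := by
    intro i j h
    have habs : q ^ (2 * n - (i : ℕ)) = q ^ (2 * n - (j : ℕ)) := by
      have := congrArg abs h
      simpa [abs_pow, abs_neg, abs_of_pos hq0] using this
    have := (pow_right_strictMono₀ hq).injective habs
    have hi := i.isLt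
    have hj := j.isLt
    exact Fin.ext (by omega)
  have hdet : A.det ≠ 0 := by
    rw [hAvdm]; exact Matrix.det_vandermonde_ne_zero_iff.mpr hinj
  have hu : IsUnit A.det := isUnit_iff_ne_zero.mpr hdet
  -- the target vector w
  set nI : Fin (2 * n + 1) := ⟨n, by omega⟩ with hnI
  set a : ℝ := -(-q) ^ (-2 * (n : ℤ) ^ 2) with ha
  set b : ℝ := (-q) ^ (-4 * (n : ℤ) ^ 2) with hb
  set w : Fin (2 * n + 1) → ℝ := Pi.single (0 : Fin (2 * n + 1)) a + Pi.single nI b with hw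
  have h0n : (0 : Fin (2 * n + 1)) ≠ nI := by
    intro h; apply_fun (Fin.val) at h; simp [hnI] at h; omega
  have hwk : ∀ k : Fin (2 * n + 1), w k =
      if (k : ℕ) = 0 then -(-q) ^ (-2 * (n : ℤ) ^ 2)
      else if (k : ℕ) = n then (-q) ^ (-4 * (n : ℤ) ^ 2)
      else 0 := by
    intro k
    rcases eq_or_ne k 0 with rfl | hk0
    · rw [hw]; simp only [Pi.add_apply, Pi.single_eq_same, Pi.single_eq_of_ne h0n]
      simp [ha]
    · rcases eq_or_ne k nI with rfl | hkn
      · have hnn : (nI : ℕ) ≠ 0 := by simp [hnI]; omega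
        rw [hw]; simp only [Pi.add_apply, Pi.single_eq_same, Pi.single_eq_of_ne (Ne.symm h0n)]
        simp [hnn, hnI, hb]
        intro h; omega
      · have h1 : (k : ℕ) ≠ 0 := fun h => hk0 (Fin.ext h)
        have h2 : (k : ℕ) ≠ n := fun h => hkn (Fin.ext (by simp [hnI, h]))
        simp [hw, Pi.single_eq_of_ne hk0, Pi.single_eq_of_ne hkn, h1, h2]
  -- A.mulVec w = v
  have hAw : A.mulVec w = v := by
    funext k
    have hA0 : A k 0 = 1 := by simp [hA, Mmat]
    have hAn : A k nI = (-q) ^ (n * (2 * n - (k : ℕ))) := by simp [hA, Mmat, hnI]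
    have hk2n : (k : ℕ) ≤ 2 * n := by omega
    have key : ((n * (2 * n - (k : ℕ)) : ℕ) : ℤ) = (n : ℤ) * (2 * (n : ℤ) - ((k : ℕ) : ℤ)) := by
      push_cast [Nat.cast_sub hk2n]; ring
    have hpow : (-q) ^ (n * (2 * n - (k : ℕ))) * b
        = (-q) ^ ((n : ℤ) * (2 * (n : ℤ) - ((k : ℕ) : ℤ)) - 4 * (n : ℤ) ^ 2) := by
      rw [hb, ← zpow_natCast (-q) (n * (2 * n - (k : ℕ))), ← zpow_add₀ hnq, key]
      ring_nf
    rw [hw, Matrix.mulVec_add, Matrix.mulVec_single, Matrix.mulVec_single]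
    simp only [Pi.add_apply, Pi.smul_apply, Matrix.col_apply, op_smul_eq_mul, hA0, hAn, one_mul]
    rw [hv k]
    rcases eq_or_ne (k : ℕ) 0 with hk | hk
    · rw [if_pos hk, hpow, ha, hk]
      have : ((n:ℤ) * (2 * (n:ℤ) - (0:ℤ)) - 4 * (n:ℤ)^2) = -2 * (n:ℤ)^2 := by ring
      push_cast
      rw [this]; ring
    · rw [if_neg hk, hpow, ha]; ring
  -- conclude by invertibility
  have h1 : A.mulVec (Δ.mulVec K) = v := by
    rw [Matrix.mulVec_mulVec]; exact hK
  have : Δ.mulVec K = w := by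
    have e1 : Δ.mulVec K = A⁻¹.mulVec v := by
      rw [← h1, Matrix.mulVec_mulVec, Matrix.nonsing_inv_mul A hu, Matrix.one_mulVec]
    have e2 : w = A⁻¹.mulVec v := by
      rw [← hAw, Matrix.mulVec_mulVec, Matrix.nonsing_inv_mul A hu, Matrix.one_mulVec]
    rw [e1, ← e2]
  rw [this]; funext k; exact hwk k
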